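/- arXiv:1804.10540 — 13 statements merged into one kernel-verified Lean document; each statement's English description precedes it below -/
import Mathlib

section
/- In any imploid, the law of double-negation introduction (a ≤ (a ⊸ b) ⊸ b for all a, b) implies the law of exchange (a ⊸ (b ⊸ c) ≤ b ⊸ (a ⊸ c) for all a, b, c). -/
theorem stmt0 {P : Type*} [Preorder P] (imp : P → P → P) (I : P)
    (himp : ∀ ⦃a₁ a₂ b₁ b₂ : P⦄, a₂ ≤ a₁ → b₁ ≤ b₂ → imp a₁ b₁ ≤ imp a₂ b₂)
    (hcomp : ∀ a b c : P, imp b c ≤ imp (imp a b) (imp a c))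
    (hid : ∀ a : P, I ≤ imp a a)
    (hunit : ∀ a : P, imp I a ≤ a)
    (hdni : ∀ a b : P, a ≤ imp (imp a b) b) :
    ∀ a b c : P, imp a (imp b c) ≤ imp b (imp a c) := by
  intro a b c
  calc imp a (imp b c)
      ≤ imp (imp (imp a (imp b c)) (imp a c)) (imp a c) := hdni _ _
    _ ≤ imp (imp (imp b c) c) (imp a c) := himp (hcomp a (imp b c) c) le_rfl
    _ ≤ imp b (imp a c) := himp (hdni b c) le_rfl
end

section
/- In any left normal imploid, the law of exchange (a ⊸ (b ⊸ c) ≤ b ⊸ (a ⊸ c) for all a, b, c) implies the law of double-negation introduction (a ≤ (a ⊸ b) ⊸ b for all a, b). -/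
theorem stmt1 {P : Type*} [Preorder P] (imp : P → P → P) (I : P)
    (himp : ∀ ⦃a₁ a₂ b₁ b₂ : P⦄, a₂ ≤ a₁ → b₁ ≤ b₂ → imp a₁ b₁ ≤ imp a₂ b₂)
    (hcomp : ∀ a b c : P, imp b c ≤ imp (imp a b) (imp a c))
    (hid : ∀ a : P, I ≤ imp a a)
    (hunit : ∀ a : P, imp I a ≤ a)
    (hln : ∀ a b : P, I ≤ imp a b → a ≤ b)
    (hexch : ∀ a b c : P, imp a (imp b c) ≤ imp b (imp a c)) :
    ∀ a b : P, a ≤ imp (imp a b) b := by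
  intro a b
  exact hln _ _ ((hid (imp a b)).trans (hexch (imp a b) a b))
end

section
/- Let P be an imploid. On the set of upward-closed subsets of P ordered by reverse inclusion, define R ⊗ S := {p | ∃ q, (q ⊸ p) ∈ R ∧ q ∈ S} and unit Î := {p | I ≤ p}. Then this forms a skew monoid: (R ⊗ S) ⊗ T ⊇ R ⊗ (S ⊗ T), Î ⊗ R ⊇ R, and R ⊇ R ⊗ Î, and ⊗ is covariant in both arguments with respect to reverse inclusion. -/
def UpClosed {P : Type*} [Preorder P] (R : Set P) : Prop :=
  ∀ ⦃a b : P⦄, a ∈ R → a ≤ b → b ∈ R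

def tensor {P : Type*} (imp : P → P → P) (R S : Set P) : Set P :=
  {p | ∃ q, imp q p ∈ R ∧ q ∈ S}

theorem stmt4 {P : Type*} [Preorder P] (imp : P → P → P) (I : P)
    (himp : ∀ ⦃a₁ a₂ b₁ b₂ : P⦄, a₂ ≤ a₁ → b₁ ≤ b₂ → imp a₁ b₁ ≤ imp a₂ b₂)
    (hcomp : ∀ a b c : P, imp b c ≤ imp (imp a b) (imp a c))
    (hid : ∀ a : P, I ≤ imp a a)
    (hunit : ∀ a : P, imp I a ≤ a) :
    (∀ R S T : Set P, UpClosed R → UpClosed S → UpClosed T →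
      tensor imp R (tensor imp S T) ⊆ tensor imp (tensor imp R S) T) ∧
    (∀ R : Set P, UpClosed R → R ⊆ tensor imp {p | I ≤ p} R) ∧
    (∀ R : Set P, UpClosed R → tensor imp R {p | I ≤ p} ⊆ R) ∧
    (∀ R₁ R₂ S₁ S₂ : Set P, R₂ ⊆ R₁ → S₂ ⊆ S₁ →
      tensor imp R₂ S₂ ⊆ tensor imp R₁ S₁) := by
  refine ⟨?_, ?_, ?_, ?_⟩
  · rintro R S T hR hS hT p ⟨q, hqp, r, hrq, hrT⟩
    exact ⟨r, ⟨imp r q, hR hqp (hcomp r q p), hrq⟩, hrT⟩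
  · rintro R hR p hp
    exact ⟨p, hid p, hp⟩
  · rintro R hR p ⟨q, hqp, hq⟩
    exact hR hqp (le_trans (himp hq le_rfl) (hunit p))
  · rintro R₁ R₂ S₁ S₂ hR hS p ⟨q, hq, hqS⟩
    exact ⟨q, hR hq, hS hqS⟩
end

section
/- Let P be an imploid. P satisfies double-negation introduction (a ≤ (a ⊸ b) ⊸ b for all a, b) if and only if R ⊗ S ⊇ S ⊗ R for all upward-closed subsets R, S of P, where R ⊗ S := {p | ∃ q, (q ⊸ p) ∈ R ∧ q ∈ S}. -/
theorem stmt5 {P : Type*} [Preorder P] (imp : P → P → P) (I : P)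
    (himp : ∀ ⦃a₁ a₂ b₁ b₂ : P⦄, a₂ ≤ a₁ → b₁ ≤ b₂ → imp a₁ b₁ ≤ imp a₂ b₂)
    (hcomp : ∀ a b c : P, imp b c ≤ imp (imp a b) (imp a c))
    (hid : ∀ a : P, I ≤ imp a a)
    (hunit : ∀ a : P, imp I a ≤ a) :
    (∀ a b : P, a ≤ imp (imp a b) b) ↔
    (∀ R S : Set P, UpClosed R → UpClosed S →
      tensor imp S R ⊆ tensor imp R S) := by
  constructor
  · intro hdni R S hR hS p hp
    obtain ⟨q, hqp, hq⟩ := hp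
    exact ⟨imp q p, hR hq (hdni q p), hqp⟩
  · intro h a b
    have hb : b ∈ tensor imp {x | imp a b ≤ x} {x | a ≤ x} :=
      ⟨a, le_refl _, le_refl _⟩
    obtain ⟨q, h1, h2⟩ := h {x | a ≤ x} {x | imp a b ≤ x}
      (fun _ _ hx hxy => le_trans hx hxy) (fun _ _ hx hxy => le_trans hx hxy) hb
    exact le_trans h1 (himp h2 (le_refl b))
end

section
/- Let P be an imploid. P satisfies exchange (a ⊸ (b ⊸ c) ≤ b ⊸ (a ⊸ c) for all a, b, c) if and only if (R ⊗ S) ⊗ T ⊇ (R ⊗ T) ⊗ S for all upward-closed subsets R, S, T of P, where R ⊗ S := {p | ∃ q, (q ⊸ p) ∈ R ∧ q ∈ S}. -/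
theorem stmt6 {P : Type*} [Preorder P] (imp : P → P → P) (I : P)
    (himp : ∀ ⦃a₁ a₂ b₁ b₂ : P⦄, a₂ ≤ a₁ → b₁ ≤ b₂ → imp a₁ b₁ ≤ imp a₂ b₂)
    (hcomp : ∀ a b c : P, imp b c ≤ imp (imp a b) (imp a c))
    (hid : ∀ a : P, I ≤ imp a a)
    (hunit : ∀ a : P, imp I a ≤ a) :
    (∀ a b c : P, imp a (imp b c) ≤ imp b (imp a c)) ↔
    (∀ R S T : Set P, UpClosed R → UpClosed S → UpClosed T →
      tensor imp (tensor imp R T) S ⊆ tensor imp (tensor imp R S) T) := by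
  constructor
  · intro hex R S T hR hS hT p hp
    obtain ⟨q, ⟨r, hrR, hrT⟩, hqS⟩ := hp
    exact ⟨r, ⟨q, hR hrR (hex r q p), hqS⟩, hrT⟩
  · intro h a b c
    have hc : c ∈ tensor imp (tensor imp {y | imp a (imp b c) ≤ y} {y | a ≤ y})
        {y | b ≤ y} := ⟨b, ⟨a, le_refl _, le_refl _⟩, le_refl _⟩
    have := h {y | imp a (imp b c) ≤ y} {y | b ≤ y} {y | a ≤ y}
      (fun x y hx hxy => le_trans hx hxy)
      (fun x y hx hxy => le_trans hx hxy)
      (fun x y hx hxy => le_trans hx hxy) hc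
    obtain ⟨r, ⟨q, hq, hbq⟩, har⟩ := this
    exact le_trans hq (himp hbq (himp har (le_refl c)))
end

section
/- Let M be a skew monoid. On the set of downward-closed subsets of M ordered by inclusion, define K ⊸ L := {m | ∀ n, n ∈ K → m ⊗ n ∈ L} and unit Î := {m | m ≤ I}. Then this forms an imploid: K ⊸ L ⊆ (J ⊸ K) ⊸ (J ⊸ L), Î ⊆ K ⊸ K, and Î ⊸ K ⊆ K, with ⊸ contravariant in the left and covariant in the right argument. -/
def DownClosed {M : Type*} [Preorder M] (K : Set M) : Prop :=
  ∀ ⦃a b : M⦄, b ∈ K → a ≤ b → a ∈ K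

def limp {M : Type*} (mul : M → M → M) (K L : Set M) : Set M :=
  {m | ∀ n, n ∈ K → mul m n ∈ L}

theorem stmt7 {M : Type*} [Preorder M] (mul : M → M → M) (I : M)
    (hmul : ∀ ⦃a₁ a₂ b₁ b₂ : M⦄, a₁ ≤ a₂ → b₁ ≤ b₂ → mul a₁ b₁ ≤ mul a₂ b₂)
    (hassoc : ∀ a b c : M, mul (mul a b) c ≤ mul a (mul b c))
    (hlunit : ∀ a : M, mul I a ≤ a)
    (hrunit : ∀ a : M, a ≤ mul a I) :
    (∀ J K L : Set M, DownClosed J → DownClosed K → DownClosed L →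
      limp mul K L ⊆ limp mul (limp mul J K) (limp mul J L)) ∧
    (∀ K : Set M, DownClosed K → {m | m ≤ I} ⊆ limp mul K K) ∧
    (∀ K : Set M, DownClosed K → limp mul {m | m ≤ I} K ⊆ K) ∧
    (∀ K₁ K₂ L₁ L₂ : Set M, K₂ ⊆ K₁ → L₁ ⊆ L₂ →
      limp mul K₁ L₁ ⊆ limp mul K₂ L₂) := by
  refine ⟨?_, ?_, ?_, ?_⟩
  · intro J K L hJ hK hL m hm n hn p hp
    exact hL (hm (mul n p) (hn p hp)) (hassoc m n p)
  · intro K hK m hm n hn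
    exact hK hn ((hmul hm le_rfl).trans (hlunit n))
  · intro K hK m hm
    exact hK (hm I le_rfl) (hrunit m)
  · intro K₁ K₂ L₁ L₂ hK hL m hm n hn
    exact hL (hm n (hK hn))
end

section
/- Let P be an imploid and R ⊆ P an upset. The following are equivalent: (1) R is dni-closed, i.e., a ∈ R implies ((a ⊸ b) ⊸ b) ∈ R for all b; (2) R satisfies both: a ∈ R implies (I ⊸ a) ∈ R, and (a ⊸ b) ∈ R implies ((b ⊸ c) ⊸ (a ⊸ c)) ∈ R for all c. -/
theorem stmt9 {P : Type*} [Preorder P] (imp : P → P → P) (I : P)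
    (himp : ∀ ⦃a₁ a₂ b₁ b₂ : P⦄, a₂ ≤ a₁ → b₁ ≤ b₂ → imp a₁ b₁ ≤ imp a₂ b₂)
    (hcomp : ∀ a b c : P, imp b c ≤ imp (imp a b) (imp a c))
    (hid : ∀ a : P, I ≤ imp a a)
    (hunit : ∀ a : P, imp I a ≤ a)
    (R : Set P) (hR : UpClosed R) :
    (∀ a b : P, a ∈ R → imp (imp a b) b ∈ R) ↔
    ((∀ a : P, a ∈ R → imp I a ∈ R) ∧
     (∀ a b : P, imp a b ∈ R → ∀ c : P, imp (imp b c) (imp a c) ∈ R)) := by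
  constructor
  · intro hdni
    refine ⟨fun a ha => ?_, fun a b hab c => ?_⟩
    · exact hR (hdni a a ha) (himp (hid a) le_rfl)
    · exact hR (hdni (imp a b) (imp a c) hab) (himp (hcomp a b c) le_rfl)
  · rintro ⟨h1, h2⟩ a b ha
    exact hR (h2 I a (h1 a ha) b) (himp le_rfl (hunit b))
end

section
/- Let P be an imploid and R ⊆ P an upset. R is dni-closed (a ∈ R implies ((a ⊸ b) ⊸ b) ∈ R for all b) if and only if R ⊗ S ⊇ S ⊗ R for all upsets S of P, where R ⊗ S := {p | ∃ q, (q ⊸ p) ∈ R ∧ q ∈ S}. -/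
theorem stmt10 {P : Type*} [Preorder P] (imp : P → P → P) (I : P)
    (himp : ∀ ⦃a₁ a₂ b₁ b₂ : P⦄, a₂ ≤ a₁ → b₁ ≤ b₂ → imp a₁ b₁ ≤ imp a₂ b₂)
    (hcomp : ∀ a b c : P, imp b c ≤ imp (imp a b) (imp a c))
    (hid : ∀ a : P, I ≤ imp a a)
    (hunit : ∀ a : P, imp I a ≤ a)
    (R : Set P) (hR : UpClosed R) :
    (∀ a b : P, a ∈ R → imp (imp a b) b ∈ R) ↔
    (∀ S : Set P, UpClosed S → tensor imp S R ⊆ tensor imp R S) := by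
  constructor
  · intro hdni S _hS p hp
    obtain ⟨q, hqp, hq⟩ := hp
    exact ⟨imp q p, hdni q p hq, hqp⟩
  · intro h a b ha
    have hS : UpClosed {x | imp a b ≤ x} := fun x y hx hxy => le_trans hx hxy
    have hb : b ∈ tensor imp {x | imp a b ≤ x} R := ⟨a, le_refl _, ha⟩
    obtain ⟨q, hq, hqS⟩ := h _ hS hb
    exact hR hq (himp hqS (le_refl b))
end

section
/- Let P be an imploid and R ⊆ P a deductively closed and dni-closed upset. Then P equipped with the induced relation a ≤_R b := (a ⊸ b) ∈ R, the same implication operation, and the same unit is a left normal imploid. In particular, ≤_R satisfies: a₂ ≤_R a₁ and b₁ ≤_R b₂ imply (a₁ ⊸ b₁) ≤_R (a₂ ⊸ b₂); and I ≤_R (a ⊸ b) implies a ≤_R b. -/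
theorem stmt11 {P : Type*} [Preorder P] (imp : P → P → P) (I : P)
    (himp : ∀ ⦃a₁ a₂ b₁ b₂ : P⦄, a₂ ≤ a₁ → b₁ ≤ b₂ → imp a₁ b₁ ≤ imp a₂ b₂)
    (hcomp : ∀ a b c : P, imp b c ≤ imp (imp a b) (imp a c))
    (hid : ∀ a : P, I ≤ imp a a)
    (hunit : ∀ a : P, imp I a ≤ a)
    (R : Set P) (hR : UpClosed R) (hRI : I ∈ R)
    (hded : ∀ a b : P, a ∈ R → imp a b ∈ R → b ∈ R)
    (hdni : ∀ a b : P, a ∈ R → imp (imp a b) b ∈ R) :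
    (∀ a : P, imp a a ∈ R) ∧
    (∀ a b c : P, imp a b ∈ R → imp b c ∈ R → imp a c ∈ R) ∧
    (∀ a₁ a₂ b₁ b₂ : P, imp a₂ a₁ ∈ R → imp b₁ b₂ ∈ R →
      imp (imp a₁ b₁) (imp a₂ b₂) ∈ R) ∧
    (∀ a b c : P, imp (imp b c) (imp (imp a b) (imp a c)) ∈ R) ∧
    (∀ a : P, imp I (imp a a) ∈ R) ∧
    (∀ a : P, imp (imp I a) a ∈ R) ∧
    (∀ a b : P, imp I (imp a b) ∈ R → imp a b ∈ R) := by
  have trans : ∀ a b c : P, imp a b ∈ R → imp b c ∈ R → imp a c ∈ R := by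
    intro a b c hab hbc
    exact hded _ _ hab (hR hbc (hcomp a b c))
  refine ⟨fun a => hR hRI (hid a), trans, ?_, ?_, ?_, ?_, ?_⟩
  · intro a₁ a₂ b₁ b₂ ha hb
    have h1 : imp (imp a₁ b₁) (imp a₁ b₂) ∈ R := hR hb (hcomp a₁ b₁ b₂)
    have h2 : imp (imp a₁ b₂) (imp a₂ b₂) ∈ R := by
      have hle : imp a₁ b₂ ≤ imp (imp a₂ a₁) (imp a₂ b₂) := hcomp a₂ a₁ b₂
      have hd := hdni (imp a₂ a₁) (imp a₂ b₂) ha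
      exact hR hd (himp hle le_rfl)
    exact trans _ _ _ h1 h2
  · intro a b c
    exact hR hRI (le_trans (hid (imp b c)) (himp le_rfl (hcomp a b c)))
  · intro a
    exact hR hRI (le_trans (hid I) (himp le_rfl (hid a)))
  · intro a
    exact hR hRI (le_trans (hid (imp I a)) (himp le_rfl (hunit a)))
  · intro a b h
    exact hR h (hunit (imp a b))
end

section
/- Let f : P → Q be a lax homomorphism of imploids. Then the kernel ker f := f⁻¹({b | I_Q ≤ b}) is a deductively closed upset of P. If moreover f is strong, then ker f is dni-closed. -/
theorem stmt13 {P Q : Type*} [Preorder P] [Preorder Q]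
    (impP : P → P → P) (IP : P) (impQ : Q → Q → Q) (IQ : Q)
    (himpP : ∀ ⦃a₁ a₂ b₁ b₂ : P⦄, a₂ ≤ a₁ → b₁ ≤ b₂ → impP a₁ b₁ ≤ impP a₂ b₂)
    (hcompP : ∀ a b c : P, impP b c ≤ impP (impP a b) (impP a c))
    (hidP : ∀ a : P, IP ≤ impP a a)
    (hunitP : ∀ a : P, impP IP a ≤ a)
    (himpQ : ∀ ⦃a₁ a₂ b₁ b₂ : Q⦄, a₂ ≤ a₁ → b₁ ≤ b₂ → impQ a₁ b₁ ≤ impQ a₂ b₂)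
    (hcompQ : ∀ a b c : Q, impQ b c ≤ impQ (impQ a b) (impQ a c))
    (hidQ : ∀ a : Q, IQ ≤ impQ a a)
    (hunitQ : ∀ a : Q, impQ IQ a ≤ a)
    (f : P → Q) (hmono : Monotone f)
    (hlaxI : IQ ≤ f IP)
    (hlaximp : ∀ a b : P, f (impP a b) ≤ impQ (f a) (f b)) :
    (UpClosed (f ⁻¹' {b | IQ ≤ b}) ∧
     IP ∈ f ⁻¹' {b | IQ ≤ b} ∧
     (∀ a b : P, a ∈ f ⁻¹' {b | IQ ≤ b} → impP a b ∈ f ⁻¹' {b | IQ ≤ b} →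
       b ∈ f ⁻¹' {b | IQ ≤ b})) ∧
    ((f IP ≤ IQ) → (∀ a b : P, impQ (f a) (f b) ≤ f (impP a b)) →
      ∀ a b : P, a ∈ f ⁻¹' {b | IQ ≤ b} →
        impP (impP a b) b ∈ f ⁻¹' {b | IQ ≤ b}) := by
  constructor
  · refine ⟨fun a b ha hab => le_trans ha (hmono hab), hlaxI, ?_⟩
    intro a b ha hab
    calc IQ ≤ f (impP a b) := hab
      _ ≤ impQ (f a) (f b) := hlaximp a b
      _ ≤ impQ IQ (f b) := himpQ ha le_rfl
      _ ≤ f b := hunitQ _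
  · intro _ hstrong a b ha
    have hX : impQ (f a) (f b) ≤ f b :=
      le_trans (himpQ ha le_rfl) (hunitQ _)
    calc IQ ≤ impQ (impQ (f a) (f b)) (impQ (f a) (f b)) := hidQ _
      _ ≤ impQ (impQ (f a) (f b)) (f b) := himpQ le_rfl hX
      _ ≤ impQ (f (impP a b)) (f b) := himpQ (hlaximp a b) le_rfl
      _ ≤ f (impP (impP a b) b) := hstrong _ _
end

section
/- In any imploid P satisfying exchange (a ⊸ (b ⊸ c) ≤ b ⊸ (a ⊸ c)), if I ≤ Γ ⊸* (a ⊸ b) and I ≤ Δ ⊸* a then I ≤ (Γ ++ Δ) ⊸* b, where for a list [c₁,...,cₙ] we define [c₁,...,cₙ] ⊸* d := c₁ ⊸ (c₂ ⊸ (... ⊸ (cₙ ⊸ d)...)). -/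
theorem stmt15 {P : Type*} [Preorder P] (imp : P → P → P) (I : P)
    (himp : ∀ ⦃a₁ a₂ b₁ b₂ : P⦄, a₂ ≤ a₁ → b₁ ≤ b₂ → imp a₁ b₁ ≤ imp a₂ b₂)
    (hcomp : ∀ a b c : P, imp b c ≤ imp (imp a b) (imp a c))
    (hid : ∀ a : P, I ≤ imp a a)
    (hunit : ∀ a : P, imp I a ≤ a)
    (hexch : ∀ a b c : P, imp a (imp b c) ≤ imp b (imp a c))
    (Γ Δ : List P) (a b : P)
    (h₁ : I ≤ Γ.foldr imp (imp a b))
    (h₂ : I ≤ Δ.foldr imp a) :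
    I ≤ (Γ ++ Δ).foldr imp b := by
  have key : imp a b ≤ imp (Δ.foldr imp a) (Δ.foldr imp b) := by
    clear h₂
    induction Δ with
    | nil => exact le_refl _
    | cons c Δ ih => exact ih.trans (hcomp c _ _)
  have hab : imp a b ≤ Δ.foldr imp b :=
    key.trans ((himp h₂ le_rfl).trans (hunit _))
  have mono : ∀ (L : List P) (u v : P), u ≤ v → L.foldr imp u ≤ L.foldr imp v := by
    intro L u v huv
    induction L with
    | nil => exact huv
    | cons c L ih => exact himp le_rfl ih
  rw [List.foldr_append]
  exact h₁.trans (mono Γ _ _ hab)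
end

section
/- Let P be a symmetric left normal imploid. If a typing judgment x₁:a₁, ..., xₙ:aₙ ⊢ T : b is derivable for a linear lambda term T (using the rules: variable x:a ⊢ x:a; application with side condition c ≤ a ⊸ b; abstraction with side condition a ⊸ b ≤ c; and exchange of adjacent context entries), then I ≤ a₁ ⊸ (a₂ ⊸ (... ⊸ (aₙ ⊸ b)...)). -/
inductive Term : Type
  | var : ℕ → Term
  | app : Term → Term → Term
  | abs : ℕ → Term → Term

inductive Deriv {P : Type*} [Preorder P] (imp : P → P → P) :
    List (ℕ × P) → Term → P → Prop
  | var (x : ℕ) (a : P) : Deriv imp [(x, a)] (Term.var x) a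
  | app {Γ Δ : List (ℕ × P)} {T₁ T₂ : Term} {a b c : P} :
      Deriv imp Γ T₁ c → Deriv imp Δ T₂ a → c ≤ imp a b →
      Deriv imp (Γ ++ Δ) (Term.app T₁ T₂) b
  | abs {Γ : List (ℕ × P)} {T₁ : Term} {x : ℕ} {a b c : P} :
      Deriv imp (Γ ++ [(x, a)]) T₁ b → imp a b ≤ c →
      Deriv imp Γ (Term.abs x T₁) c
  | exch {Γ Δ : List (ℕ × P)} {T : Term} {x y : ℕ} {a b c : P} :
      Deriv imp (Γ ++ (y, b) :: (x, a) :: Δ) T c →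
      Deriv imp (Γ ++ (x, a) :: (y, b) :: Δ) T c

theorem stmt16 {P : Type*} [Preorder P] (imp : P → P → P) (I : P)
    (himp : ∀ ⦃a₁ a₂ b₁ b₂ : P⦄, a₂ ≤ a₁ → b₁ ≤ b₂ → imp a₁ b₁ ≤ imp a₂ b₂)
    (hcomp : ∀ a b c : P, imp b c ≤ imp (imp a b) (imp a c))
    (hid : ∀ a : P, I ≤ imp a a)
    (hunit : ∀ a : P, imp I a ≤ a)
    (hln : ∀ a b : P, I ≤ imp a b → a ≤ b)
    (hexch : ∀ a b c : P, imp a (imp b c) ≤ imp b (imp a c))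
    (Γ : List (ℕ × P)) (T : Term) (b : P)
    (h : Deriv imp Γ T b) :
    I ≤ (Γ.map Prod.snd).foldr imp b := by
  have mono : ∀ (l : List P) {b b' : P}, b ≤ b' → l.foldr imp b ≤ l.foldr imp b' := by
    intro l
    induction l with
    | nil => intro b b' h; exact h
    | cons d l ih => intro b b' h; exact himp le_rfl (ih h)
  have funct : ∀ (l : List P) (a b : P),
      imp a b ≤ imp (l.foldr imp a) (l.foldr imp b) := by
    intro l a b
    induction l with
    | nil => exact le_rfl
    | cons d l ih => exact ih.trans (hcomp d _ _)
  induction h with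
  | var x a => simpa using hid a
  | @app Γ Δ T₁ T₂ a b c _ _ hc ih1 ih2 =>
      have h1 : c ≤ (Δ.map Prod.snd).foldr imp b := by
        refine hc.trans ((funct (Δ.map Prod.snd) a b).trans ?_)
        exact (himp ih2 le_rfl).trans (hunit _)
      have := ih1.trans (mono (Γ.map Prod.snd) h1)
      simpa [List.foldr_append] using this
  | @abs Γ T₁ x a b c _ hab ih =>
      simp only [List.map_append, List.foldr_append] at ih
      exact ih.trans (mono (Γ.map Prod.snd) hab)
  | @exch Γ Δ T x y a b c _ ih =>
      simp only [List.map_append, List.foldr_append, List.map_cons, List.foldr_cons] at ih ⊢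
      exact ih.trans (mono (Γ.map Prod.snd) (hexch _ _ _))
end

section
/- Let P be an imploid in which every upset of the form considered is closed under the operations below. For upsets R, S of P with the product R ⊗ S := {p | ∃ q, (q ⊸ p) ∈ R ∧ q ∈ S}: if R and S are both dni-closed (a ∈ R implies ((a ⊸ b) ⊸ b) ∈ R for all b, and similarly for S), then R ⊗ S is dni-closed. -/
theorem stmt19 {P : Type*} [Preorder P] (imp : P → P → P) (I : P)
    (himp : ∀ ⦃a₁ a₂ b₁ b₂ : P⦄, a₂ ≤ a₁ → b₁ ≤ b₂ → imp a₁ b₁ ≤ imp a₂ b₂)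
    (hcomp : ∀ a b c : P, imp b c ≤ imp (imp a b) (imp a c))
    (hid : ∀ a : P, I ≤ imp a a)
    (hunit : ∀ a : P, imp I a ≤ a)
    (R S : Set P) (hR : UpClosed R) (hS : UpClosed S)
    (hRdni : ∀ a b : P, a ∈ R → imp (imp a b) b ∈ R)
    (hSdni : ∀ a b : P, a ∈ S → imp (imp a b) b ∈ S) :
    ∀ a b : P, a ∈ tensor imp R S → imp (imp a b) b ∈ tensor imp R S := by
  rintro a b ⟨q, hr, hq⟩
  set r := imp q a with hrdef
  -- witness for the tensor membership
  refine ⟨imp (imp q b) b, ?_, hSdni q b hq⟩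
  -- L := (r⊸b)⊸b ∈ R
  have hL : imp (imp r b) b ∈ R := hRdni r b hr
  -- M ≤ (a⊸b) ⊸ (r⊸b)
  have h1 : imp a b ≤ imp r (imp q b) := hcomp q a b
  have hM : imp (imp q b) b ≤ imp (imp a b) (imp r b) :=
    le_trans (hcomp r (imp q b) b) (himp h1 le_rfl)
  -- L ≤ M ⊸ ((a⊸b)⊸b)
  have hLM : imp (imp r b) b ≤ imp (imp (imp q b) b) (imp (imp a b) b) :=
    le_trans (hcomp (imp a b) (imp r b) b) (himp hM le_rfl)
  exact hR hL hLM
end
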